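/- Let α₁, α₂, β > 0 with α₁ + α₂ = 1, and let x₀ > 0. Consider in ℝ² the circle C₁ centered at ((1 + 2α₂/β)x₀, 0) with radius 2x₀√((α₂/β)(1 + α₂/β)), and the circle C₂ centered at (−(1 + 2α₁/β)x₀, 0) with radius 2x₀√((α₁/β)(1 + α₁/β)). Then the sum of the two radii is at most the distance between the centers; in particular the open disks bounded by C₁ and C₂ are disjoint. -/

import Mathlib

lemma sqrt_aux (a : ℝ) (ha : 0 ≤ a) : Real.sqrt (a * (1 + a)) ≤ a + 1/2 := by
  rw [show a + 1/2 = Real.sqrt ((a + 1/2)^2) by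
    rw [Real.sqrt_sq (by linarith)]]
  apply Real.sqrt_le_sqrt
  nlinarith

theorem stmt1 (α₁ α₂ β x₀ : ℝ) (hα₁ : 0 < α₁) (hα₂ : 0 < α₂) (hβ : 0 < β)
    (hsum : α₁ + α₂ = 1) (hx₀ : 0 < x₀)
    (c₁ c₂ : EuclideanSpace ℝ (Fin 2))
    (hc₁ : c₁ = ![(1 + 2 * α₂ / β) * x₀, 0])
    (hc₂ : c₂ = ![-((1 + 2 * α₁ / β) * x₀), 0])
    (r₁ r₂ : ℝ)
    (hr₁ : r₁ = 2 * x₀ * Real.sqrt ((α₂ / β) * (1 + α₂ / β)))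
    (hr₂ : r₂ = 2 * x₀ * Real.sqrt ((α₁ / β) * (1 + α₁ / β))) :
    r₁ + r₂ ≤ dist c₁ c₂ ∧ Disjoint (Metric.ball c₁ r₁) (Metric.ball c₂ r₂) := by
  have ha : (0:ℝ) ≤ α₂ / β := le_of_lt (div_pos hα₂ hβ)
  have hb : (0:ℝ) ≤ α₁ / β := le_of_lt (div_pos hα₁ hβ)
  have hd : dist c₁ c₂ = (2 + 2 * α₂ / β + 2 * α₁ / β) * x₀ := by
    rw [EuclideanSpace.dist_eq]
    simp [Fin.sum_univ_two, Real.dist_eq, hc₁, hc₂]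
    rw [show (1 + 2 * α₂ / β) * x₀ + (1 + 2 * α₁ / β) * x₀
        = (2 + 2 * α₂ / β + 2 * α₁ / β) * x₀ by ring]
    rw [Real.sqrt_sq (by positivity)]
  have key : r₁ + r₂ ≤ dist c₁ c₂ := by
    rw [hd, hr₁, hr₂]
    have h1 := sqrt_aux _ ha
    have h2 := sqrt_aux _ hb
    have h1' := mul_le_mul_of_nonneg_left h1 (by positivity : (0:ℝ) ≤ 2 * x₀)
    have h2' := mul_le_mul_of_nonneg_left h2 (by positivity : (0:ℝ) ≤ 2 * x₀)
    refine le_trans (add_le_add h1' h2') (le_of_eq ?_)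
    ring
  exact ⟨key, Metric.ball_disjoint_ball key⟩
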